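/- Let n ∈ ℕ, m ∈ ℕ₀ with 2m ≤ n+1, and let ℓ be an integer with 2 ≤ ℓ ≤ m. Then ((m−ℓ+1)/(n−2m+2ℓ−1)) · (1 − ((m−ℓ+1)/(n−m+ℓ))^{ℓ+1}) ≤ (1/binom(n,m+1))·∑_{j=0}^{m} binom(n,j). -/

import Mathlib

lemma geom_aux_binom_sum (r : ℝ) (hr : r ≠ 1) (k : ℕ) :
    r / (1 - r) * (1 - r ^ (k + 1)) = ∑ i ∈ Finset.range (k + 1), r ^ (i + 1) := by
  have hsum := geom_sum_eq hr (k + 1)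
  have h1 : ∑ i ∈ Finset.range (k+1), r^(i+1) = (∑ i ∈ Finset.range (k+1), r^i) * r := by
    rw [Finset.sum_mul]
    exact Finset.sum_congr rfl fun i _ => (pow_succ r i).symm
  rw [h1, hsum]
  have h3 : r - 1 ≠ 0 := sub_ne_zero.mpr hr
  have h2 : 1 - r ≠ 0 := fun h => h3 (by linarith [sub_eq_zero.mp h])
  field_simp
  ring

theorem binom_sum_lower (n m ℓ : ℕ) (hn : 1 ≤ n) (hm : 2 * m ≤ n + 1)
    (hℓ1 : 2 ≤ ℓ) (hℓ2 : ℓ ≤ m) :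
    (((m : ℝ) - ℓ + 1) / ((n : ℝ) - 2 * m + 2 * ℓ - 1)) *
        (1 - (((m : ℝ) - ℓ + 1) / ((n : ℝ) - m + ℓ)) ^ (ℓ + 1)) ≤
      (∑ j ∈ Finset.range (m + 1), (n.choose j : ℝ)) / (n.choose (m + 1)) := by
  have hmn : m + 1 ≤ n := by omega
  set u := m - ℓ + 1 with hu
  set d := n - m + ℓ with hd
  have hud : u + 2 ≤ d := by omega
  have hu1 : 1 ≤ u := by omega
  -- choose recursion step
  have hstep : ∀ k, k ≤ m → n.choose (k+1) * (k+1) = n.choose k * (n - m + (m - k)) := by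
    intro k hk
    have h : n - k = n - m + (m - k) := by omega
    rw [← h, Nat.choose_succ_right_eq]
  have hB : ∀ i, i ≤ ℓ → (u+1)^i * n.choose (m+1) ≤ d^i * n.choose (m+1-i) := by
    intro i hi
    induction i with
    | zero => simp
    | succ i ih =>
      have h1 := ih (by omega)
      have hcs : n.choose (m - i + 1) * (m - i + 1) = n.choose (m - i) * (n - m + i) := by
        have h := hstep (m - i) (by omega)
        rwa [show m - (m - i) = i by omega] at h
      have hmul : (u + 1) * (n - m + i) ≤ (m - i + 1) * d := by
        calc (u+1) * (n - m + i) ≤ (m - i + 1) * (n - m + i) :=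
              Nat.mul_le_mul_right _ (by omega)
          _ ≤ (m - i + 1) * d := Nat.mul_le_mul_left _ (by omega)
      have h2 : (u + 1) * n.choose (m + 1 - i) ≤ d * n.choose (m - i) := by
        have h3 : (u + 1) * n.choose (m + 1 - i) * (m - i + 1)
            ≤ d * n.choose (m - i) * (m - i + 1) := by
          rw [show m + 1 - i = m - i + 1 by omega]
          calc (u+1) * n.choose (m - i + 1) * (m - i + 1)
              = (u+1) * (n.choose (m - i + 1) * (m - i + 1)) := by ring
            _ = (u+1) * (n.choose (m - i) * (n - m + i)) := by rw [hcs]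
            _ = n.choose (m - i) * ((u+1) * (n - m + i)) := by ring
            _ ≤ n.choose (m - i) * ((m - i + 1) * d) := Nat.mul_le_mul_left _ hmul
            _ = d * n.choose (m - i) * (m - i + 1) := by ring
        exact Nat.le_of_mul_le_mul_right h3 (by omega)
      calc (u+1)^(i+1) * n.choose (m+1) = (u+1) * ((u+1)^i * n.choose (m+1)) := by ring
        _ ≤ (u+1) * (d^i * n.choose (m+1-i)) := Nat.mul_le_mul_left _ h1
        _ = d^i * ((u+1) * n.choose (m+1-i)) := by ring
        _ ≤ d^i * (d * n.choose (m-i)) := Nat.mul_le_mul_left _ h2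
        _ = d^(i+1) * n.choose (m+1-(i+1)) := by
            rw [show m + 1 - (i+1) = m - i by omega]; ring
  have key : ∀ i, i ≤ ℓ + 1 → u^i * n.choose (m+1) ≤ d^i * n.choose (m+1-i) := by
    intro i hi
    rcases Nat.lt_or_ge i (ℓ+1) with h | h
    · exact le_trans (Nat.mul_le_mul_right _ (Nat.pow_le_pow_left (by omega) _))
        (hB i (by omega))
    · have hi' : i = ℓ + 1 := by omega
      subst hi'
      have hlast : u * n.choose (m + 1 - ℓ) = d * n.choose (m - ℓ) := by
        have h := hstep (m - ℓ) (by omega)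
        rw [show m - (m - ℓ) = ℓ by omega] at h
        calc u * n.choose (m + 1 - ℓ)
            = n.choose (m - ℓ + 1) * (m - ℓ + 1) := by
              rw [show m + 1 - ℓ = m - ℓ + 1 by omega, hu]; ring
          _ = n.choose (m - ℓ) * (n - m + ℓ) := h
          _ = d * n.choose (m - ℓ) := by rw [hd]; ring
      have hpu : u^(ℓ-1) * u = u^ℓ := by rw [← pow_succ, show ℓ - 1 + 1 = ℓ by omega]
      have hvd : u^ℓ * (d+1) ≤ (u+1)^ℓ * d := by
        have hx : u^(ℓ-1) * (u+1) ≤ (u+1)^ℓ := by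
          calc u^(ℓ-1) * (u+1) ≤ (u+1)^(ℓ-1) * (u+1) :=
                Nat.mul_le_mul_right _ (Nat.pow_le_pow_left (by omega) _)
            _ = (u+1)^(ℓ-1+1) := by rw [pow_succ]
            _ = (u+1)^ℓ := by rw [show ℓ - 1 + 1 = ℓ by omega]
        calc u^ℓ * (d+1) = u^ℓ * d + u^(ℓ-1) * u := by rw [hpu]; ring
          _ ≤ u^ℓ * d + u^(ℓ-1) * d :=
              Nat.add_le_add_left (Nat.mul_le_mul_left _ (by omega)) _
          _ = (u^(ℓ-1) * (u+1)) * d := by rw [← hpu]; ring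
          _ ≤ (u+1)^ℓ * d := Nat.mul_le_mul_right _ hx
      have hmain : u^(ℓ+1) * n.choose (m+1) * (d+1)
          ≤ d^(ℓ+1) * n.choose (m - ℓ) * (d+1) := by
        calc u^(ℓ+1) * n.choose (m+1) * (d+1)
            = (u^ℓ * (d+1)) * (u * n.choose (m+1)) := by ring
          _ ≤ ((u+1)^ℓ * d) * (u * n.choose (m+1)) := Nat.mul_le_mul_right _ hvd
          _ = (u * d) * ((u+1)^ℓ * n.choose (m+1)) := by ring
          _ ≤ (u * d) * (d^ℓ * n.choose (m+1-ℓ)) := Nat.mul_le_mul_left _ (hB ℓ le_rfl)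
          _ = (d * d^ℓ) * (u * n.choose (m+1-ℓ)) := by ring
          _ = (d * d^ℓ) * (d * n.choose (m - ℓ)) := by rw [hlast]
          _ ≤ d^(ℓ+1) * n.choose (m-ℓ) * (d+1) := by
              have : d * d^ℓ = d^(ℓ+1) := by rw [pow_succ]; ring
              rw [this]
              nlinarith [Nat.zero_le (d^(ℓ+1) * n.choose (m-ℓ))]
      have h := Nat.le_of_mul_le_mul_right hmain (by omega)
      rwa [show m + 1 - (ℓ+1) = m - ℓ by omega]
  -- real side
  have hUc : (u:ℝ) = (m:ℝ) - ℓ + 1 := by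
    rw [hu]; push_cast [Nat.cast_sub hℓ2]; ring
  have hDc : (d:ℝ) = (n:ℝ) - m + ℓ := by
    rw [hd]; push_cast [Nat.cast_sub (show m ≤ n by omega)]; ring
  have hDU : (n:ℝ) - 2*m + 2*ℓ - 1 = (d:ℝ) - u := by rw [hUc, hDc]; ring
  have hDpos : (0:ℝ) < d := by
    have : 0 < d := by omega
    exact_mod_cast this
  have hUpos : (0:ℝ) < u := by
    have : 0 < u := by omega
    exact_mod_cast this
  have hULtD : (u:ℝ) < d := by
    have : u < d := by omega
    exact_mod_cast this
  set r : ℝ := (u:ℝ) / d with hr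
  have hrlt : r < 1 := by rw [hr, div_lt_one hDpos]; exact hULtD
  have hrne : r ≠ 1 := ne_of_lt hrlt
  have hCpos : (0:ℝ) < n.choose (m+1) := by
    have : 0 < n.choose (m+1) := Nat.choose_pos hmn
    exact_mod_cast this
  rw [hUc.symm, hDc.symm, hDU, le_div_iff₀ hCpos]
  -- geometric sum identity
  have hd0 : (d:ℝ) ≠ 0 := ne_of_gt hDpos
  have hdu0 : (d:ℝ) - u ≠ 0 := by intro h; nlinarith
  have hgeom : ((u:ℝ)/((d:ℝ)-u)) * (1 - r ^ (ℓ+1)) = ∑ i ∈ Finset.range (ℓ+1), r^(i+1) := by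
    have h0 : (u:ℝ)/((d:ℝ)-u) = r/(1-r) := by
      rw [hr]
      rw [show 1 - (u:ℝ)/d = ((d:ℝ)-u)/d by field_simp]
      rw [div_div_div_eq]
      rw [mul_comm (u:ℝ) (d:ℝ), mul_div_mul_left _ _ hd0]
    rw [h0, geom_aux_binom_sum r hrne ℓ]
  calc ((u:ℝ)/((d:ℝ)-u)) * (1 - ((u:ℝ)/(d:ℝ))^(ℓ+1)) * (n.choose (m+1):ℝ)
      = (∑ i ∈ Finset.range (ℓ+1), r^(i+1)) * (n.choose (m+1):ℝ) := by rw [← hgeom]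
    _ = ∑ i ∈ Finset.range (ℓ+1), r^(i+1) * (n.choose (m+1):ℝ) := Finset.sum_mul _ _ _
    _ ≤ ∑ i ∈ Finset.range (ℓ+1), (n.choose (m-i) : ℝ) := by
        apply Finset.sum_le_sum
        intro i hi
        rw [Finset.mem_range] at hi
        have hk := key (i+1) (by omega)
        rw [show m+1-(i+1) = m-i by omega] at hk
        have hkR : (u:ℝ)^(i+1) * (n.choose (m+1):ℝ)
            ≤ (d:ℝ)^(i+1) * (n.choose (m-i):ℝ) := by exact_mod_cast hk
        have hdp : (0:ℝ) < (d:ℝ)^(i+1) := by positivity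
        rw [hr, div_pow, div_mul_eq_mul_div, div_le_iff₀ hdp]
        exact hkR.trans_eq (mul_comm _ _)
    _ = ∑ j ∈ (Finset.range (ℓ+1)).image (fun i => m - i), (n.choose j : ℝ) := by
        rw [Finset.sum_image]
        intro x hx y hy hxy
        rw [Finset.mem_coe, Finset.mem_range] at hx hy
        simp only at hxy
        omega
    _ ≤ ∑ j ∈ Finset.range (m+1), (n.choose j : ℝ) := by
        apply Finset.sum_le_sum_of_subset_of_nonneg
        · intro x hx
          simp only [Finset.mem_image, Finset.mem_range] at hx
          rw [Finset.mem_range]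
          omega
        · intro j _ _
          positivity
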